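/- For every d ∈ ℤ_{>0} and all nonzero real numbers γ₁, ..., γ_d, the matrix product identity ∏_{k=1}^{d} [[1, iγ_k],[−i/γ_k, 1]] · ᵗ(1, 0) = (γ₁γ₂···γ_d)^{−1} · ᵗ( γ₁·(γ₁+γ₂)(γ₂+γ₃)···(γ_{d−1}+γ_d), −i·(γ₁+γ₂)(γ₂+γ₃)···(γ_{d−1}+γ_d) ) holds, where the product of matrices is taken in the order k = 1, 2, ..., d and the products (γ₁+γ₂)···(γ_{d−1}+γ_d) are interpreted as the empty product 1 when d = 1. -/

import Mathlib

open Complex Matrix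

noncomputable section

/-- The matrix product identity
`∏_{k=1}^d [[1, iγ_k],[−i/γ_k, 1]]·ᵗ(1,0)
  = (γ₁⋯γ_d)⁻¹·ᵗ(γ₁(γ₁+γ₂)(γ₂+γ₃)⋯(γ_{d−1}+γ_d), −i(γ₁+γ₂)(γ₂+γ₃)⋯(γ_{d−1}+γ_d))`,
where the product over `k` is taken in the order `k = 1, 2, …, d` and empty products are `1`. -/
theorem aux : ∀ (n : ℕ) (γ : ℕ → ℝ), (∀ k, 1 ≤ k → k ≤ n + 1 → γ k ≠ 0) →
    (((List.range (n+1)).map (fun i =>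
        (!![1, Complex.I * (γ (i + 1) : ℂ); -Complex.I / (γ (i + 1) : ℂ), 1] :
          Matrix (Fin 2) (Fin 2) ℂ))).prod).mulVec ![1, 0]
      = (∏ k ∈ Finset.Icc 1 (n+1), (γ k : ℂ))⁻¹ •
          ![(γ 1 : ℂ) * ∏ k ∈ Finset.Icc 1 n, ((γ k : ℂ) + (γ (k + 1) : ℂ)),
            -Complex.I * ∏ k ∈ Finset.Icc 1 n, ((γ k : ℂ) + (γ (k + 1) : ℂ))] := by
  intro n
  induction n with
  | zero =>
    intro γ hγ
    have h1 : (γ 1 : ℂ) ≠ 0 := by exact_mod_cast Complex.ofReal_ne_zero.mpr (hγ 1 le_rfl le_rfl)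
    funext i
    fin_cases i <;>
      simp [List.range_succ, Matrix.mulVec, dotProduct, Fin.sum_univ_two, Finset.Icc_self] <;>
      field_simp
  | succ n ih =>
    intro γ hγ
    have hγ' : ∀ k, 1 ≤ k → k ≤ n + 1 → γ (k+1) ≠ 0 := fun k a b => hγ (k+1) (by omega) (by omega)
    have IH := ih (fun k => γ (k+1)) hγ'
    have hg1 : (γ 1 : ℂ) ≠ 0 := by exact_mod_cast Complex.ofReal_ne_zero.mpr (hγ 1 le_rfl (by omega))
    have hP : (∏ k ∈ Finset.Icc 1 (n+1), (γ (k+1) : ℂ)) ≠ 0 :=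
      Finset.prod_ne_zero_iff.mpr (fun k hk => by
        have := Finset.mem_Icc.mp hk
        exact_mod_cast Complex.ofReal_ne_zero.mpr (hγ' k this.1 this.2))
    have h1 : (∏ k ∈ Finset.Icc 1 (n+2), (γ k:ℂ)) = (γ 1:ℂ) * ∏ k ∈ Finset.Icc 1 (n+1), (γ (k+1):ℂ) := by
      rw [← Finset.Ico_add_one_right_eq_Icc, ← Finset.Ico_add_one_right_eq_Icc, Finset.prod_Ico_eq_prod_range,
        Finset.prod_Ico_eq_prod_range]
      rw [show n + 2 + 1 - 1 = (n+1) + 1 from rfl, show n + 1 + 1 - 1 = n + 1 from rfl,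
        Finset.prod_range_succ', mul_comm]
      simp [← Nat.add_assoc]
    have h2 : (∏ k ∈ Finset.Icc 1 (n+1), ((γ k:ℂ) + γ (k+1)))
        = ((γ 1:ℂ) + γ 2) * ∏ k ∈ Finset.Icc 1 n, ((γ (k+1):ℂ) + γ (k+2)) := by
      rw [← Finset.Ico_add_one_right_eq_Icc, ← Finset.Ico_add_one_right_eq_Icc, Finset.prod_Ico_eq_prod_range,
        Finset.prod_Ico_eq_prod_range]
      rw [show n + 1 + 1 - 1 = n + 1 from rfl, show n + 1 - 1 = n from rfl,
        Finset.prod_range_succ', mul_comm]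
      simp [← Nat.add_assoc]
    have hlist : List.range (n+2) = 0 :: (List.range (n+1)).map Nat.succ :=
      List.range_succ_eq_map (n := n+1)
    rw [hlist, List.map_cons, List.prod_cons, List.map_map, ← Matrix.mulVec_mulVec]
    have hcomp : ((fun i => (!![1, Complex.I * (γ (i + 1) : ℂ); -Complex.I / (γ (i + 1) : ℂ), 1] :
          Matrix (Fin 2) (Fin 2) ℂ)) ∘ Nat.succ)
        = (fun i => (!![1, Complex.I * (γ (i + 1 + 1) : ℂ); -Complex.I / (γ (i + 1 + 1) : ℂ), 1] :
          Matrix (Fin 2) (Fin 2) ℂ)) := rfl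
    rw [hcomp, IH, h1]
    set Q := ∏ k ∈ Finset.Icc 1 n, ((γ (k+1):ℂ) + γ (k+2)) with hQ
    set P := ∏ k ∈ Finset.Icc 1 (n+1), (γ (k+1):ℂ) with hPdef
    rw [h2]
    funext j
    fin_cases j <;>
      simp [Matrix.mulVec, dotProduct, Fin.sum_univ_two, Matrix.smul_cons, smul_eq_mul] <;>
      field_simp <;>
      ring_nf <;>
      simp [Complex.I_sq] <;>
      ring

theorem gamma_matrix_product_identity
    (d : ℕ) (hd : 0 < d) (γ : ℕ → ℝ) (hγ : ∀ k, 1 ≤ k → k ≤ d → γ k ≠ 0) :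
    (((List.range d).map (fun i =>
        (!![1, Complex.I * (γ (i + 1) : ℂ); -Complex.I / (γ (i + 1) : ℂ), 1] :
          Matrix (Fin 2) (Fin 2) ℂ))).prod).mulVec ![1, 0]
      = (∏ k ∈ Finset.Icc 1 d, (γ k : ℂ))⁻¹ •
          ![(γ 1 : ℂ) * ∏ k ∈ Finset.Icc 1 (d - 1), ((γ k : ℂ) + (γ (k + 1) : ℂ)),
            -Complex.I * ∏ k ∈ Finset.Icc 1 (d - 1), ((γ k : ℂ) + (γ (k + 1) : ℂ))] := by
  obtain ⟨n, rfl⟩ : ∃ n, d = n + 1 := ⟨d - 1, by omega⟩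
  exact aux n γ hγ

end
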